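/- Let a cone in R³ with apex A = (0,1,0) be parametrized by x(t,v) = (1−v)t, y(t,v) = v, u(t,v) = (1−v)c(t), where c is analytic with c(0) = c'(0) = 0 and c''(0) =: c₂ ≠ 0. If near the origin the cone is the graph u = F(x,y), then F₁₀ = F₀₁ = 0, F₂₀ = c₂, F₁₁ = 0, F₀₂ = 0, F₃₀ = c₃, F₂₁ = c₂, F₃₁ = 2c₃, F₄₀ = c₄, where c_k := c^{(k)}(0) and F_{jk} := ∂^{j+k}F/∂x^j∂y^k at (0,0). Consequently the invariants evaluate to S := (F₂₀F₂₁ − F₁₁F₃₀)/F₂₀² = 1 and W := (2F₁₁F₃₀² + F₂₀²F₃₁ − 2F₂₀F₂₁F₃₀ − F₂₀F₁₁F₄₀)/(F₂₀²(F₂₀F₂₁ − F₁₁F₃₀)^{2/3}) = 0. -/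

import Mathlib

/-- Partial derivative in the first variable. -/
noncomputable def pdx (F : ℝ × ℝ → ℝ) : ℝ × ℝ → ℝ :=
  fun p => deriv (fun x => F (x, p.2)) p.1

/-- Partial derivative in the second variable. -/
noncomputable def pdy (F : ℝ × ℝ → ℝ) : ℝ × ℝ → ℝ :=
  fun p => deriv (fun y => F (p.1, y)) p.2

open Filter

lemma deriv_comp_const_mul' (g : ℝ → ℝ) (a x : ℝ) :
    deriv (fun t => g (a * t)) x = a * deriv g (a * x) := by
  rcases eq_or_ne a 0 with rfl | ha
  · simp
  by_cases hg : DifferentiableAt ℝ g (a * x)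
  · have h1 : HasDerivAt (fun t : ℝ => a * t) a x := by
      simpa using (hasDerivAt_id x).const_mul a
    have h2 : HasDerivAt (fun t => g (a * t)) (deriv g (a * x) * a) x :=
      hg.hasDerivAt.comp x h1
    rw [h2.deriv]; ring
  · rw [deriv_zero_of_not_differentiableAt hg, mul_zero,
      deriv_zero_of_not_differentiableAt]
    intro hcomp
    apply hg
    have heq : g = (fun t => g (a * t)) ∘ (fun y => a⁻¹ * y) := by
      funext y; simp [ha]
    rw [heq]
    have h2 : DifferentiableAt ℝ (fun y : ℝ => a⁻¹ * y) (a * x) := by fun_prop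
    have h3 : a⁻¹ * (a * x) = x := by field_simp
    exact (h3 ▸ hcomp).comp (a*x) h2

lemma key_lemma (c : ℝ → ℝ) (F : ℝ × ℝ → ℝ)
    (hfund : ∀ᶠ q : ℝ × ℝ in nhds ((0 : ℝ), (0 : ℝ)),
      (1 - q.2) * c q.1 = F ((1 - q.2) * q.1, q.2)) (k : ℕ) :
    ∀ᶠ q : ℝ × ℝ in nhds ((0 : ℝ), (0 : ℝ)),
      (1 - q.2) ^ k * pdx^[k] F ((1 - q.2) * q.1, q.2)
        = (1 - q.2) * deriv^[k] c q.1 := by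
  induction k with
  | zero => simpa using hfund.mono (fun q h => h.symm)
  | succ k ih =>
    filter_upwards [ih.eventually_nhds] with q0 hq0
    have htend : Tendsto (fun t : ℝ => (t, q0.2)) (nhds q0.1) (nhds q0) := by
      rw [← Prod.mk.eta (p := q0)]
      exact (continuous_id.prodMk continuous_const).tendsto q0.1
    have ht : (fun t => (1 - q0.2) ^ k * pdx^[k] F ((1 - q0.2) * t, q0.2))
        =ᶠ[nhds q0.1] (fun t => (1 - q0.2) * deriv^[k] c t) :=
      htend.eventually hq0
    have hd := ht.deriv_eq
    rw [deriv_const_mul_field, deriv_const_mul_field,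
      deriv_comp_const_mul' (fun x => pdx^[k] F (x, q0.2))] at hd
    have hL : deriv (fun x => pdx^[k] F (x, q0.2)) ((1 - q0.2) * q0.1)
        = pdx^[k+1] F ((1 - q0.2) * q0.1, q0.2) := by
      rw [Function.iterate_succ_apply']; rfl
    rw [hL] at hd
    rw [Function.iterate_succ_apply' deriv]
    rw [pow_succ]
    nlinarith [hd]

/-- For the normalized cone `x(t,v) = (1−v)t`, `y(t,v) = v`,
`u(t,v) = (1−v)c(t)` graphed near the origin as `u = F(x,y)`, the low order
Taylor coefficients of `F` at the origin are determined by those of `c`, and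
consequently the invariants evaluate to `S = 1` and `W = 0`. Here the
fractional power `(·)^{2/3}` is realized as the cube root of the square. -/
theorem cone_invariants_S_and_W
    (c : ℝ → ℝ) (hc : AnalyticAt ℝ c 0)
    (hc0 : c 0 = 0) (hc1 : deriv c 0 = 0) (hc2 : deriv^[2] c 0 ≠ 0)
    (F : ℝ × ℝ → ℝ) (hF : AnalyticAt ℝ F ((0 : ℝ), (0 : ℝ)))
    (hfund : ∀ᶠ q : ℝ × ℝ in nhds ((0 : ℝ), (0 : ℝ)),
      (1 - q.2) * c q.1 = F ((1 - q.2) * q.1, q.2)) :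
    pdx F (0, 0) = 0 ∧ pdy F (0, 0) = 0
    ∧ pdx (pdx F) (0, 0) = deriv^[2] c 0
    ∧ pdy (pdx F) (0, 0) = 0
    ∧ pdy (pdy F) (0, 0) = 0
    ∧ pdx^[3] F (0, 0) = deriv^[3] c 0
    ∧ pdy (pdx (pdx F)) (0, 0) = deriv^[2] c 0
    ∧ pdy (pdx^[3] F) (0, 0) = 2 * deriv^[3] c 0
    ∧ pdx^[4] F (0, 0) = deriv^[4] c 0
    ∧ (let F20 := pdx (pdx F) (0, 0)
       let F11 := pdy (pdx F) (0, 0)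
       let F21 := pdy (pdx (pdx F)) (0, 0)
       let F30 := pdx^[3] F (0, 0)
       let F31 := pdy (pdx^[3] F) (0, 0)
       let F40 := pdx^[4] F (0, 0)
       (F20 * F21 - F11 * F30) / F20 ^ 2 = 1
       ∧ (2 * F11 * F30 ^ 2 + F20 ^ 2 * F31 - 2 * F20 * F21 * F30 - F20 * F11 * F40)
           / (F20 ^ 2 * ((F20 * F21 - F11 * F30) ^ 2) ^ ((1 : ℝ) / 3)) = 0) := by
  have hpdx2 : pdx (pdx F) = pdx^[2] F := rfl
  have htend2 : Tendsto (fun v : ℝ => ((0:ℝ), v)) (nhds 0) (nhds ((0:ℝ),(0:ℝ))) :=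
    (continuous_const.prodMk continuous_id).tendsto 0
  have hne : ∀ᶠ v : ℝ in nhds 0, (1 : ℝ) - v ≠ 0 := by
    filter_upwards [eventually_ne_nhds (zero_ne_one (α := ℝ))] with v hv
    exact sub_ne_zero.mpr (Ne.symm hv)
  have keyv : ∀ k : ℕ, ∀ᶠ v : ℝ in nhds 0,
      (1 - v) ^ k * pdx^[k] F (0, v) = (1 - v) * deriv^[k] c 0 := by
    intro k
    filter_upwards [htend2.eventually (key_lemma c F hfund k)] with v hv
    simpa using hv
  have keyval : ∀ k : ℕ, pdx^[k] F (0, 0) = deriv^[k] c 0 := by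
    intro k
    have := (keyv k).self_of_nhds
    simpa using this
  -- mixed derivatives along the vertical line
  have hmix1 : ∀ᶠ v : ℝ in nhds 0, pdx F (0, v) = 0 := by
    filter_upwards [keyv 1, hne] with v hv hv1
    simp only [Function.iterate_one, pow_one, hc1, mul_zero] at hv
    exact (mul_eq_zero.mp hv).resolve_left hv1
  have hmix2 : ∀ᶠ v : ℝ in nhds 0,
      pdx^[2] F (0, v) = deriv^[2] c 0 * (1 - v)⁻¹ := by
    filter_upwards [keyv 2, hne] with v hv hv1
    have h2 : (1 - v) * ((1 - v) * pdx^[2] F (0, v))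
        = (1 - v) * deriv^[2] c 0 := by linear_combination hv
    have h3 := mul_left_cancel₀ hv1 h2
    rw [← h3, mul_comm (1 - v), mul_assoc, mul_inv_cancel₀ hv1, mul_one]
  have hmix3 : ∀ᶠ v : ℝ in nhds 0,
      pdx^[3] F (0, v) = deriv^[3] c 0 * ((1 - v)⁻¹) ^ 2 := by
    filter_upwards [keyv 3, hne] with v hv hv1
    have h2 : (1 - v) * ((1 - v) ^ 2 * pdx^[3] F (0, v))
        = (1 - v) * deriv^[3] c 0 := by linear_combination hv
    have h3 := mul_left_cancel₀ hv1 h2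
    rw [← h3, inv_pow, mul_comm ((1 - v) ^ 2), mul_assoc,
      mul_inv_cancel₀ (pow_ne_zero 2 hv1), mul_one]
  -- F(0, v) = 0 and pdy F (0, v) = 0 eventually
  have hF0 : ∀ᶠ v : ℝ in nhds 0, F (0, v) = 0 := by
    filter_upwards [htend2.eventually hfund] with v hv
    simp [hc0] at hv
    simpa using hv.symm
  have hpdyF0 : ∀ᶠ v : ℝ in nhds 0, pdy F (0, v) = 0 := by
    filter_upwards [hF0.eventually_nhds] with v hv
    have h1 : (fun y => F (0, y)) =ᶠ[nhds v] (fun _ => (0:ℝ)) := hv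
    simp only [pdy]
    rw [h1.deriv_eq, deriv_const]
  -- derivative of (1-v)⁻¹ at 0
  have hinv : HasDerivAt (fun v : ℝ => (1 - v)⁻¹) 1 0 := by
    have h1 : HasDerivAt (fun v : ℝ => 1 - v) (-1) 0 := by
      simpa using (hasDerivAt_id (0:ℝ)).const_sub 1
    have := h1.inv (by norm_num : (1:ℝ) - 0 ≠ 0)
    simp at this; exact this
  -- the individual facts
  have h10 : pdx F (0, 0) = 0 := by
    have := keyval 1; simpa [hc1] using this
  have h01 : pdy F (0, 0) = 0 := by
    have h1 : (fun y => F (0, y)) =ᶠ[nhds (0:ℝ)] (fun _ => (0:ℝ)) := hF0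
    simp only [pdy]
    rw [h1.deriv_eq, deriv_const]
  have h20 : pdx (pdx F) (0, 0) = deriv^[2] c 0 := by rw [hpdx2]; exact keyval 2
  have h11 : pdy (pdx F) (0, 0) = 0 := by
    have h1 : (fun v => pdx F (0, v)) =ᶠ[nhds (0:ℝ)] (fun _ => (0:ℝ)) := hmix1
    simp only [pdy]
    rw [h1.deriv_eq, deriv_const]
  have h02 : pdy (pdy F) (0, 0) = 0 := by
    have h1 : (fun v => pdy F (0, v)) =ᶠ[nhds (0:ℝ)] (fun _ => (0:ℝ)) := hpdyF0
    have h0 : pdy (pdy F) (0, 0) = deriv (fun v => pdy F (0, v)) 0 := rfl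
    rw [h0, h1.deriv_eq, deriv_const]
  have h30 : pdx^[3] F (0, 0) = deriv^[3] c 0 := keyval 3
  have h21 : pdy (pdx (pdx F)) (0, 0) = deriv^[2] c 0 := by
    rw [hpdx2]
    have h1 : (fun v => pdx^[2] F (0, v)) =ᶠ[nhds (0:ℝ)]
        (fun v => deriv^[2] c 0 * (1 - v)⁻¹) := hmix2
    have h2 : HasDerivAt (fun v : ℝ => deriv^[2] c 0 * (1 - v)⁻¹)
        (deriv^[2] c 0 * 1) 0 := hinv.const_mul _
    simp only [pdy]
    rw [h1.deriv_eq, h2.deriv, mul_one]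
  have h31 : pdy (pdx^[3] F) (0, 0) = 2 * deriv^[3] c 0 := by
    have h1 : (fun v => pdx^[3] F (0, v)) =ᶠ[nhds (0:ℝ)]
        (fun v => deriv^[3] c 0 * ((1 - v)⁻¹) ^ 2) := hmix3
    have h2 : HasDerivAt (fun v : ℝ => ((1 - v)⁻¹) ^ 2)
        (2 * ((1 - (0:ℝ))⁻¹) ^ 1 * 1) 0 := hinv.pow 2
    have h3 : HasDerivAt (fun v : ℝ => deriv^[3] c 0 * ((1 - v)⁻¹) ^ 2)
        (deriv^[3] c 0 * (2 * ((1 - (0:ℝ))⁻¹) ^ 1 * 1)) 0 := h2.const_mul _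
    simp only [pdy]
    rw [h1.deriv_eq, h3.deriv]
    norm_num; ring
  have h40 : pdx^[4] F (0, 0) = deriv^[4] c 0 := keyval 4
  refine ⟨h10, h01, h20, h11, h02, h30, h21, h31, h40, ?_, ?_⟩
  · rw [h20, h11, h21, h30]
    rw [div_eq_one_iff_eq (pow_ne_zero 2 hc2)]
    ring
  · rw [h20, h11, h21, h30, h31, h40]
    have : 2 * 0 * (deriv^[3] c 0) ^ 2 + (deriv^[2] c 0) ^ 2 * (2 * deriv^[3] c 0)
        - 2 * deriv^[2] c 0 * deriv^[2] c 0 * deriv^[3] c 0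
        - deriv^[2] c 0 * 0 * deriv^[4] c 0 = 0 := by ring
    rw [this, zero_div]
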